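/- Let F be a free group on generators a, b. For n-tuples (q₁,…,qₙ) of positive integers, the element ψ_{(q₁,…,qₙ)} = a^{q₁} b^{-q₁} ⋯ a^{qₙ} b^{-qₙ} determines the tuple (q₁,…,qₙ) uniquely up to cyclic permutation among all elements conjugate to it of this form with the same n; in particular two such elements ψ_{(q₁,…,qₙ)} and ψ_{(q'₁,…,q'ₙ)} are conjugate in F if and only if (q'₁,…,q'ₙ) is a cyclic permutation of (q₁,…,qₙ). -/

import Mathlib

set_option linter.unusedSectionVars false

namespace Stmt3Aux
open FreeGroup List

variable {α : Type*} [DecidableEq α]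

def R (p q : α × Bool) : Prop := ¬(p.1 = q.1 ∧ p.2 = !q.2)

def Good (L : List (α × Bool)) : Prop := ∀ p ∈ L, ∀ q ∈ L, R p q

lemma Good.chain' {L : List (α × Bool)} (h : Good L) : List.Chain' (R (α := α)) L :=
  (List.pairwise_of_forall_mem_list h).isChain

lemma Good.sub {L L' : List (α × Bool)} (h : Good L) (hs : ∀ p ∈ L', p ∈ L) : Good L' :=
  fun p hp q hq => h p (hs p hp) q (hs q hq)

lemma reduce_eq_self {L : List (α × Bool)} (h : List.Chain' (R (α := α)) L) :
    FreeGroup.reduce L = L := by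
  induction L with
  | nil => rfl
  | cons x t ih =>
    rw [FreeGroup.reduce.cons, ih h.tail]
    cases t with
    | nil => rfl
    | cons y t' =>
      have hR : R x y := (List.isChain_cons_cons.mp h).1
      simp only [R] at hR
      simp [hR]

lemma chain'_reduce (L : List (α × Bool)) : List.Chain' (R (α := α)) (FreeGroup.reduce L) := by
  induction L with
  | nil => exact List.isChain_nil
  | cons x t ih =>
    rw [FreeGroup.reduce.cons]
    cases hr : FreeGroup.reduce t with
    | nil => exact List.isChain_singleton _
    | cons y t' =>
      rw [hr] at ih
      by_cases hc : x.1 = y.1 ∧ x.2 = !y.2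
      · simpa [hc, List.Chain'] using ih.tail
      · simpa [hc, List.Chain', List.isChain_cons_cons] using (⟨hc, ih⟩ : R x y ∧ List.IsChain R (y :: t'))

lemma chain'_toWord (z : FreeGroup α) : List.Chain' (R (α := α)) z.toWord := by
  rw [← FreeGroup.reduce_toWord]; exact chain'_reduce _

lemma rotate_last {β : Type*} (w : List β) (e : β) : (w ++ [e]).rotate w.length = e :: w := by
  rw [List.rotate_eq_drop_append_take (by simp), List.drop_left, List.take_left]; rfl

lemma conj_rotate : ∀ (N : ℕ) (g x y : FreeGroup α),
    g.toWord.length ≤ N → Good x.toWord →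
    x.toWord.length = y.toWord.length → y = g * x * g⁻¹ →
    ∃ m, y.toWord = x.toWord.rotate m := by
  intro N
  induction N with
  | zero =>
    intro g x y hg _ _ hy
    have hgnil : g = 1 := toWord_eq_nil_iff.mp (List.length_eq_zero_iff.mp (Nat.le_zero.mp hg))
    subst hgnil
    exact ⟨0, by simp [hy]⟩
  | succ N ih =>
    intro g x y hg hgood hlen hy
    rcases eq_or_ne x.toWord [] with hunil | hune
    · have hx1 : x = 1 := toWord_eq_nil_iff.mp hunil
      subst hx1
      exact ⟨0, by simp [hy]⟩
    rcases eq_or_ne g 1 with rfl | hg1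
    · exact ⟨0, by simp [hy]⟩
    set u := x.toWord with hu
    set h := g.toWord with hh
    have hhne : h ≠ [] := fun hnil => hg1 (toWord_eq_nil_iff.mp hnil)
    obtain ⟨h', c, hhc⟩ : ∃ h' c, h = h' ++ [c] := by
      rcases List.eq_nil_or_concat h with h0 | ⟨h', c, hc⟩
      · exact absurd h0 hhne
      · exact ⟨h', c, by simpa [List.concat_eq_append] using hc⟩
    set d := u.head hune with hd
    set e := u.getLast hune with he
    have hudt : d :: u.tail = u := List.cons_head_tail hune
    have hude : u.dropLast ++ [e] = u := List.dropLast_append_getLast hune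
    have hgmk : g = mk h := (mk_toWord (x := g)).symm
    have hxmk : x = mk u := (mk_toWord (x := x)).symm
    have hglen' : (mk h').toWord.length ≤ N := by
      have h1 : (mk h').toWord = FreeGroup.reduce h' := toWord_mk
      have h2 : (FreeGroup.reduce h').length ≤ h'.length :=
        FreeGroup.Red.length_le FreeGroup.reduce.red
      have h3 : h'.length + 1 = h.length := by simp [hhc]
      rw [h1]
      omega
    by_cases hc1 : c.1 = d.1 ∧ c.2 = !d.2
    · -- cancellation on the left: rotate forward by 1
      have key : mk [c] * mk [d] = (1 : FreeGroup α) := by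
        rw [FreeGroup.mul_mk, FreeGroup.one_eq_mk]
        apply FreeGroup.reduce.exact
        simp [FreeGroup.reduce.cons, FreeGroup.reduce_singleton, hc1]
      have hg' : g * mk [d] = mk h' := by
        rw [hgmk, hhc, ← FreeGroup.mul_mk, mul_assoc, key, mul_one]
      set x' := mk (u.tail ++ [d]) with hx'
      have hxx' : (mk [d])⁻¹ * x * mk [d] = x' := by
        have hx2 : x = mk [d] * mk u.tail := by
          rw [hxmk, FreeGroup.mul_mk]
          exact congrArg mk hudt.symm
        rw [hx2, hx', ← FreeGroup.mul_mk]
        group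
      have hxw : x'.toWord = u.tail ++ [d] := by
        rw [hx', toWord_mk]
        apply reduce_eq_self
        refine (hgood.sub ?_).chain'
        intro p hp
        rcases List.mem_append.mp hp with hp | hp
        · exact List.mem_of_mem_tail hp
        · simp only [List.mem_singleton] at hp
          subst hp
          exact List.head_mem hune
      have hrot : x'.toWord = u.rotate 1 := by
        rw [hxw]
        conv_rhs => rw [← hudt]
        rw [List.rotate_cons_succ, List.rotate_zero]
      have hy' : y = mk h' * x' * (mk h')⁻¹ := by
        rw [← hg', ← hxx', hy]
        group
      have hgood' : Good x'.toWord := by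
        rw [hrot]
        exact hgood.sub (fun p hp => (List.mem_rotate).mp hp)
      have hlen' : x'.toWord.length = y.toWord.length := by
        rw [hrot, List.length_rotate]
        exact hlen
      obtain ⟨m, hm⟩ := ih (mk h') x' y hglen' hgood' hlen' hy'
      exact ⟨1 + m, by rw [hm, hrot, List.rotate_rotate]⟩
    · by_cases hc2 : c = e
      · -- cancellation on the right: rotate backward by 1
        have einv : (mk [e] : FreeGroup α)⁻¹ = mk [(e.1, !e.2)] := by
          rw [FreeGroup.inv_mk]
          simp [FreeGroup.invRev]
        have key : mk [c] * mk [(e.1, !e.2)] = (1 : FreeGroup α) := by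
          rw [FreeGroup.mul_mk, FreeGroup.one_eq_mk, hc2]
          apply FreeGroup.reduce.exact
          simp [FreeGroup.reduce.cons, FreeGroup.reduce_singleton]
        have hg' : g * (mk [e])⁻¹ = mk h' := by
          rw [hgmk, hhc, einv, ← FreeGroup.mul_mk, mul_assoc, key, mul_one]
        set x' := mk (e :: u.dropLast) with hx'
        have hxx' : mk [e] * x * (mk [e])⁻¹ = x' := by
          have hx2 : x = mk u.dropLast * mk [e] := by
            rw [hxmk, FreeGroup.mul_mk]
            exact congrArg mk hude.symm
          rw [hx2, hx', show (e :: u.dropLast) = [e] ++ u.dropLast from rfl, ← FreeGroup.mul_mk]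
          group
        have hxw : x'.toWord = e :: u.dropLast := by
          rw [hx', toWord_mk]
          apply reduce_eq_self
          refine (hgood.sub ?_).chain'
          intro p hp
          rcases List.mem_cons.mp hp with hp | hp
          · subst hp; exact List.getLast_mem hune
          · exact List.mem_of_mem_dropLast hp
        have hrot : x'.toWord = u.rotate (u.length - 1) := by
          rw [hxw]
          conv_rhs => rw [← hude]
          rw [show (u.dropLast ++ [e]).length - 1 = u.dropLast.length by simp]
          exact (rotate_last _ _).symm
        have hy' : y = mk h' * x' * (mk h')⁻¹ := by
          rw [← hg', ← hxx', hy]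
          group
        have hgood' : Good x'.toWord := by
          rw [hrot]
          exact hgood.sub (fun p hp => (List.mem_rotate).mp hp)
        have hlen' : x'.toWord.length = y.toWord.length := by
          rw [hrot, List.length_rotate]
          exact hlen
        obtain ⟨m, hm⟩ := ih (mk h') x' y hglen' hgood' hlen' hy'
        exact ⟨(u.length - 1) + m, by rw [hm, hrot, List.rotate_rotate]⟩
      · -- no cancellation: length contradiction
        exfalso
        have hinv : g⁻¹.toWord = FreeGroup.invRev h := by rw [FreeGroup.toWord_inv]
        have hinvh : FreeGroup.invRev h = (c.1, !c.2) :: FreeGroup.invRev h' := by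
          rw [hhc]
          simp [FreeGroup.invRev]
        have hch : List.Chain' (R (α := α)) (h ++ (u ++ FreeGroup.invRev h)) := by
          apply List.isChain_append.mpr
          refine ⟨chain'_toWord g, ?_, ?_⟩
          · apply List.isChain_append.mpr
            refine ⟨hgood.chain', ?_, ?_⟩
            · have h2 := chain'_toWord (g⁻¹)
              rwa [hinv] at h2
            · intro p hp q hq
              have hpe : p = e := by
                have : u.getLast? = some e := List.getLast?_eq_getLast hune ▸ rfl
                rw [this] at hp
                exact (Option.mem_some_iff.mp hp).symm
              have hqc : q = (c.1, !c.2) := by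
                rw [hinvh] at hq
                simp only [List.head?_cons] at hq
                exact (Option.mem_some_iff.mp hq).symm
              subst hpe hqc
              rintro ⟨h1, h2⟩
              exact hc2 (Prod.ext h1.symm (by simpa using h2.symm))
          · intro p hp q hq
            have hpc : p = c := by
              rw [hhc] at hp
              simp only [List.getLast?_append, List.getLast?_singleton] at hp
              exact (Option.mem_some_iff.mp hp).symm
            have hqd : q = d := by
              have : u.head? = some d := by rw [← hudt]; rfl
              have h2 : (u ++ FreeGroup.invRev h).head? = some d := by
                rw [← hudt]; rfl
              rw [h2] at hq
              exact (Option.mem_some_iff.mp hq).symm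
            subst hpc hqd
            exact hc1
        have hyw : y.toWord = h ++ (u ++ FreeGroup.invRev h) := by
          have hymk : y = mk (h ++ (u ++ FreeGroup.invRev h)) := by
            rw [hy, hgmk, hxmk, FreeGroup.inv_mk, FreeGroup.mul_mk, FreeGroup.mul_mk,
              List.append_assoc]
          rw [hymk, toWord_mk, reduce_eq_self hch]
        have hlen2 := hlen
        rw [hyw] at hlen2
        simp only [List.length_append, FreeGroup.invRev_length] at hlen2
        have hh1 : h.length = h'.length + 1 := by simp [hhc]
        omega


def A : Fin 2 × Bool := (0, true)
def Bb : Fin 2 × Bool := (1, false)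
def blk (q : ℕ) : List (Fin 2 × Bool) := List.replicate q A ++ List.replicate q Bb
def W (l : List ℕ) : List (Fin 2 × Bool) := (l.map blk).flatten

lemma W_nil : W [] = [] := rfl

lemma W_cons (q : ℕ) (t : List ℕ) : W (q :: t) = blk q ++ W t := by
  simp [W]

lemma length_blk (q : ℕ) : (blk q).length = 2 * q := by
  simp [blk]; omega

lemma mem_W {x : Fin 2 × Bool} {l : List ℕ} (hx : x ∈ W l) : x = A ∨ x = Bb := by
  simp only [W, List.mem_flatten, List.mem_map] at hx
  obtain ⟨L, ⟨q, _, rfl⟩, hxL⟩ := hx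
  rcases List.mem_append.mp hxL with h | h
  · exact Or.inl (List.eq_of_mem_replicate h)
  · exact Or.inr (List.eq_of_mem_replicate h)

lemma good_W (l : List ℕ) : Good (W l) := by
  intro p hp q hq
  rcases mem_W hp with rfl | rfl <;> rcases mem_W hq with rfl | rfl <;> first | (unfold R A Bb; decide) | (unfold R A; decide) | (unfold R Bb; decide) | (unfold R A Bb; decide)

lemma length_W (l : List ℕ) : (W l).length = 2 * l.sum := by
  induction l with
  | nil => rfl
  | cons q t ih =>
    rw [W_cons, List.length_append, ih, length_blk, List.sum_cons]
    omega

lemma toWord_mk_W (l : List ℕ) : (FreeGroup.mk (W l)).toWord = W l := by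
  rw [toWord_mk]
  exact reduce_eq_self (good_W l).chain'

lemma rep_eq {β : Type*} (Aa : β) : ∀ (i : ℕ) (j : ℕ) (L L' : List β),
    L.head? ≠ some Aa → L'.head? ≠ some Aa →
    List.replicate i Aa ++ L = List.replicate j Aa ++ L' → i = j ∧ L = L' := by
  intro i
  induction i with
  | zero =>
    intro j L L' hL hL' heq
    cases j with
    | zero => simpa using heq
    | succ j =>
      exfalso
      apply hL
      simp only [List.replicate_succ, List.replicate_zero, List.nil_append,
        List.cons_append] at heq
      rw [heq]
      rfl
  | succ i ih =>
    intro j L L' hL hL' heq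
    cases j with
    | zero =>
      exfalso
      apply hL'
      simp only [List.replicate, List.nil_append] at heq
      rw [← heq]
      simp [List.replicate_succ]
    | succ j =>
      simp only [List.replicate_succ, List.cons_append, List.cons.injEq] at heq
      obtain ⟨h1, h2⟩ := ih j L L' hL hL' heq.2
      exact ⟨by omega, h2⟩

lemma headW {l : List ℕ} (hl : l ≠ []) (hpos : ∀ q ∈ l, 1 ≤ q) : (W l).head? = some A := by
  cases l with
  | nil => exact absurd rfl hl
  | cons q t =>
    have hq : 1 ≤ q := hpos q (List.mem_cons_self)
    obtain ⟨s, rfl⟩ : ∃ s, q = s + 1 := ⟨q - 1, by omega⟩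
    rw [W_cons, blk, List.replicate_succ]
    rfl

lemma W_ne_nil {l : List ℕ} (hl : l ≠ []) (hpos : ∀ q ∈ l, 1 ≤ q) : W l ≠ [] := by
  intro h
  have := headW hl hpos
  rw [h] at this
  simp at this

lemma lastW {l : List ℕ} (hl : l ≠ []) (hpos : ∀ q ∈ l, 1 ≤ q) : (W l).getLast? = some Bb := by
  induction l with
  | nil => exact absurd rfl hl
  | cons q t ih =>
    rw [W_cons]
    rcases eq_or_ne t [] with rfl | ht
    · have hq : 1 ≤ q := hpos q (List.mem_cons_self)
      obtain ⟨s, rfl⟩ : ∃ s, q = s + 1 := ⟨q - 1, by omega⟩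
      rw [W_nil, List.append_nil, blk, List.replicate_succ' (n := s) (a := Bb), ← List.append_assoc]
      exact List.getLast?_concat
    · have hW : W t ≠ [] := W_ne_nil ht (fun r hr => hpos r (List.mem_cons_of_mem _ hr))
      rw [List.getLast?_append_of_ne_nil _ hW]
      exact ih ht (fun r hr => hpos r (List.mem_cons_of_mem _ hr))

lemma W_inj : ∀ (l l' : List ℕ), (∀ q ∈ l, 1 ≤ q) → (∀ q ∈ l', 1 ≤ q) →
    W l = W l' → l = l' := by
  intro l
  induction l with
  | nil =>
    intro l' _ hp' heq
    cases l' with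
    | nil => rfl
    | cons q t =>
      exfalso
      have := headW (List.cons_ne_nil q t) hp'
      rw [← heq] at this
      simp [W_nil] at this
  | cons q t ih =>
    intro l' hp hp' heq
    cases l' with
    | nil =>
      exfalso
      have := headW (List.cons_ne_nil q t) hp
      rw [heq] at this
      simp [W_nil] at this
    | cons q' t' =>
      have hq : 1 ≤ q := hp q (List.mem_cons_self)
      have hq' : 1 ≤ q' := hp' q' (List.mem_cons_self)
      rw [W_cons, W_cons, blk, blk, List.append_assoc, List.append_assoc] at heq
      have hhead : (List.replicate q Bb ++ W t).head? ≠ some A := by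
        obtain ⟨s, rfl⟩ : ∃ s, q = s + 1 := ⟨q - 1, by omega⟩
        rw [List.replicate_succ]
        simp only [List.cons_append, List.head?_cons]
        intro h
        exact absurd (Option.some.inj h) (by decide)
      have hhead' : (List.replicate q' Bb ++ W t').head? ≠ some A := by
        obtain ⟨s, rfl⟩ : ∃ s, q' = s + 1 := ⟨q' - 1, by omega⟩
        rw [List.replicate_succ]
        simp only [List.cons_append, List.head?_cons]
        intro h
        exact absurd (Option.some.inj h) (by decide)
      obtain ⟨h1, h2⟩ := rep_eq A q q' _ _ hhead hhead' heq
      subst h1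
      have h3 : W t = W t' := List.append_cancel_left h2
      rw [ih t' (fun r hr => hp r (List.mem_cons_of_mem _ hr))
        (fun r hr => hp' r (List.mem_cons_of_mem _ hr)) h3]

lemma boundary : ∀ (l : List ℕ), (∀ q ∈ l, 1 ≤ q) → ∀ p : ℕ,
    (W l)[p]? = some A → (p = 0 ∨ (W l)[p-1]? = some Bb) →
    ∃ k ≤ l.length, p = ((l.take k).map blk).flatten.length := by
  intro l
  induction l with
  | nil =>
    intro _ p hA _
    simp [W_nil] at hA
  | cons q t ih =>
    intro hpos p hA hB
    have hq : 1 ≤ q := hpos q (List.mem_cons_self)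
    have hposT : ∀ r ∈ t, 1 ≤ r := fun r hr => hpos r (List.mem_cons_of_mem _ hr)
    rw [W_cons] at hA hB
    by_cases hp2q : p < 2 * q
    · -- inside the first block
      rw [List.getElem?_append_left (by rw [length_blk]; omega)] at hA
      by_cases hpq : p < q
      · -- an `A` position; must be p = 0
        rcases Nat.eq_zero_or_pos p with rfl | hppos
        · exact ⟨0, by omega, by simp⟩
        · exfalso
          rcases hB with h0 | hB
          · omega
          rw [List.getElem?_append_left (by rw [length_blk]; omega)] at hB
          rw [blk, List.getElem?_append_left (by simpa using by omega : p - 1 < (List.replicate q A).length)] at hB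
          rw [List.getElem?_replicate_of_lt (by omega)] at hB
          exact absurd (Option.some.inj hB) (by decide)
      · -- a `B` position; contradiction with hA
        exfalso
        rw [blk, List.getElem?_append_right (by simpa using by omega : (List.replicate q A).length ≤ p)] at hA
        rw [List.length_replicate, List.getElem?_replicate_of_lt (by omega)] at hA
        exact absurd (Option.some.inj hA) (by decide)
    · -- beyond the first block
      push_neg at hp2q
      rw [List.getElem?_append_right (by rw [length_blk]; omega)] at hA
      rw [length_blk] at hA
      rcases eq_or_lt_of_le hp2q with hpeq | hplt
      · -- exactly at the start of the second block
        refine ⟨1, by simp, ?_⟩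
        simp [length_blk, ← hpeq]
      · -- strictly inside the rest
        rcases hB with h0 | hB
        · omega
        rw [List.getElem?_append_right (by rw [length_blk]; omega)] at hB
        rw [length_blk] at hB
        have hB' : (W t)[p - 2 * q - 1]? = some Bb := by
          have : p - 1 - 2 * q = p - 2 * q - 1 := by omega
          rwa [this] at hB
        obtain ⟨k, hk, hlen⟩ := ih hposT (p - 2 * q) hA (Or.inr hB')
        refine ⟨k + 1, by simpa using by omega, ?_⟩
        simp only [List.take_succ_cons, List.map_cons, List.flatten_cons, List.length_append,
          length_blk]
        omega

lemma rotate_boundary (l : List ℕ) (k : ℕ) (hk : k ≤ l.length) :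
    (W l).rotate (((l.take k).map blk).flatten.length) = W (l.rotate k) := by
  have h1 : W l = ((l.take k).map blk).flatten ++ ((l.drop k).map blk).flatten := by
    rw [W]
    conv_lhs => rw [← List.take_append_drop k l]
    rw [List.map_append, List.flatten_append]
  rw [h1, List.rotate_eq_drop_append_take (by simp only [List.length_append]; exact Nat.le_add_right _ _), List.drop_left, List.take_left]
  rw [List.rotate_eq_drop_append_take hk, W, List.map_append, List.flatten_append]

lemma mk_blk (q : ℕ) :
    (FreeGroup.of (0 : Fin 2)) ^ q * ((FreeGroup.of (1 : Fin 2))⁻¹) ^ q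
      = FreeGroup.mk (blk q) := by
  have h1 : (FreeGroup.of (0 : Fin 2)) ^ q
      = FreeGroup.mk (List.replicate q ((0 : Fin 2), true)) := by
    rw [← FreeGroup.toWord_of_pow, FreeGroup.mk_toWord]
  have h2 : ((FreeGroup.of (1 : Fin 2))⁻¹) ^ q
      = FreeGroup.mk (List.replicate q ((1 : Fin 2), false)) := by
    have h3 : (FreeGroup.of (1 : Fin 2)) ^ q = FreeGroup.mk (List.replicate q ((1 : Fin 2), true)) := by
      rw [← FreeGroup.toWord_of_pow, FreeGroup.mk_toWord]
    rw [inv_pow, h3, FreeGroup.inv_mk]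
    congr 1
    simp [FreeGroup.invRev, List.map_replicate, List.reverse_replicate]
  rw [h1, h2, FreeGroup.mul_mk]
  rfl

lemma mk_W (l : List ℕ) :
    (l.map fun q => (FreeGroup.of (0 : Fin 2)) ^ q * ((FreeGroup.of (1 : Fin 2))⁻¹) ^ q).prod
      = FreeGroup.mk (W l) := by
  induction l with
  | nil => rw [List.map_nil, List.prod_nil, W_nil, FreeGroup.one_eq_mk]
  | cons q t ih =>
    rw [List.map_cons, List.prod_cons, ih, mk_blk, FreeGroup.mul_mk, W_cons]

def φ : FreeGroup (Fin 2) →* Multiplicative ℤ :=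
  FreeGroup.lift (fun i => Multiplicative.ofAdd (if i = 0 then (1 : ℤ) else 0))

lemma φ_ψ (l : List ℕ) :
    φ ((l.map fun q => (FreeGroup.of (0 : Fin 2)) ^ q * ((FreeGroup.of (1 : Fin 2))⁻¹) ^ q).prod)
      = Multiplicative.ofAdd (l.sum : ℤ) := by
  induction l with
  | nil => simp
  | cons q t ih =>
    rw [List.map_cons, List.prod_cons, _root_.map_mul, ih, _root_.map_mul, map_pow, map_pow,
      _root_.map_inv]
    have h1 : φ (FreeGroup.of (0 : Fin 2)) = Multiplicative.ofAdd (1 : ℤ) := by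
      simp [φ, FreeGroup.lift_apply_of]
    have h2 : φ (FreeGroup.of (1 : Fin 2)) = Multiplicative.ofAdd (0 : ℤ) := by
      simp [φ, FreeGroup.lift_apply_of]
    rw [h1, h2, List.sum_cons, ← ofAdd_nsmul]
    simp only [ofAdd_zero, inv_one, one_pow, mul_one, smul_eq_mul]
    rw [← ofAdd_add]
    congr 1
    push_cast
    ring

lemma φ_conj {X Y : FreeGroup (Fin 2)} (h : IsConj X Y) : φ X = φ Y := by
  obtain ⟨c, hc⟩ := isConj_iff.mp h
  have : φ Y = φ c * φ X * (φ c)⁻¹ := by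
    rw [← _root_.map_inv, ← _root_.map_mul, ← _root_.map_mul, hc]
  rw [this, mul_comm (φ c) (φ X), mul_assoc, mul_inv_cancel, mul_one]

end Stmt3Aux

open Stmt3Aux in
/-- In the free group on two generators `a, b`, for tuples of positive integers
`(q₁,…,qₙ)` the elements `ψ = a^{q₁} b^{-q₁} ⋯ a^{qₙ} b^{-qₙ}` (same length `n ≥ 1`)
are conjugate if and only if one tuple is a cyclic permutation of the other. -/
theorem stmt_3 (a b : FreeGroup (Fin 2))
    (ha : a = FreeGroup.of 0) (hb : b = FreeGroup.of 1)
    (ψ : List ℕ → FreeGroup (Fin 2))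
    (hψ : ∀ l : List ℕ, ψ l = (l.map fun q => a ^ q * (b⁻¹) ^ q).prod)
    (n : ℕ) (hn : 1 ≤ n) (l l' : List ℕ)
    (hl : l.length = n) (hl' : l'.length = n)
    (hpos : ∀ q ∈ l, 1 ≤ q) (hpos' : ∀ q ∈ l', 1 ≤ q) :
    IsConj (ψ l) (ψ l') ↔ ∃ m : ℕ, l' = l.rotate m := by
  subst ha hb
  have hψW : ∀ L : List ℕ, ψ L = FreeGroup.mk (W L) := fun L => by
    rw [hψ, mk_W]
  have hlne : l ≠ [] := by
    intro h0
    rw [h0] at hl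
    simp at hl
    omega
  have hl'ne : l' ≠ [] := by
    intro h0
    rw [h0] at hl'
    simp at hl'
    omega
  constructor
  · intro hconj
    obtain ⟨c, hc⟩ := isConj_iff.mp hconj
    -- exponent sums agree
    have hsum : l.sum = l'.sum := by
      have hφ := φ_conj hconj
      rw [hψ, hψ, φ_ψ, φ_ψ] at hφ
      have h3 : (l.sum : ℤ) = (l'.sum : ℤ) := Multiplicative.ofAdd.injective hφ
      exact_mod_cast h3
    have hlen : (ψ l).toWord.length = (ψ l').toWord.length := by
      rw [hψW, hψW, toWord_mk_W, toWord_mk_W, length_W, length_W, hsum]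
    have hgood : Good ((ψ l).toWord) := by
      rw [hψW, toWord_mk_W]
      exact good_W l
    obtain ⟨m, hm⟩ := conj_rotate (c.toWord.length) c (ψ l) (ψ l') le_rfl hgood hlen hc.symm
    rw [hψW, hψW, toWord_mk_W, toWord_mk_W] at hm
    -- hm : W l' = (W l).rotate m
    have hLpos : 0 < (W l).length := List.length_pos_iff.mpr (W_ne_nil hlne hpos)
    set p := m % (W l).length with hp
    have hrotp : W l' = (W l).rotate p := by rw [hm, hp, List.rotate_mod]
    rcases Nat.eq_zero_or_pos p with hp0 | hppos
    · rw [hp0, List.rotate_zero] at hrotp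
      exact ⟨0, by rw [List.rotate_zero]; exact W_inj l' l hpos' hpos hrotp⟩
    · have hplt : p < (W l).length := Nat.mod_lt _ hLpos
      have hA : (W l)[p]? = some A := by
        have hh := headW hl'ne hpos'
        rw [hrotp, List.rotate_eq_drop_append_take hplt.le] at hh
        have hd : (W l).drop p ≠ [] := by
          intro hnil
          have := congrArg List.length hnil
          simp only [List.length_drop, List.length_nil] at this
          omega
        rw [List.head?_append_of_ne_nil _ hd, List.head?_eq_getElem?, List.getElem?_drop] at hh
        simpa using hh
      have hBb : (W l)[p-1]? = some Bb := by
        have hlast := lastW hl'ne hpos'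
        rw [hrotp, List.rotate_eq_drop_append_take hplt.le] at hlast
        have ht : (W l).take p ≠ [] := by
          intro hnil
          have := congrArg List.length hnil
          simp only [List.length_take, List.length_nil] at this
          omega
        rw [List.getLast?_append_of_ne_nil _ ht, List.getLast?_eq_getElem?, List.length_take,
          min_eq_left hplt.le, List.getElem?_take_of_lt (by omega)] at hlast
        exact hlast
      obtain ⟨k, hk, hkp⟩ := boundary l hpos p hA (Or.inr hBb)
      have hrb := rotate_boundary l k hk
      rw [← hkp] at hrb
      rw [hrb] at hrotp
      exact ⟨k, W_inj l' (l.rotate k) hpos'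
        (fun r hr => hpos r (List.mem_rotate.mp hr)) hrotp⟩
  · rintro ⟨m, rfl⟩
    have hlpos : 0 < l.length := List.length_pos_iff.mpr hlne
    set m' := m % l.length with hm'
    have hrot : l.rotate m = l.drop m' ++ l.take m' := by
      rw [← List.rotate_mod, ← hm',
        List.rotate_eq_drop_append_take (Nat.mod_lt _ hlpos).le]
    have hsplit : ∀ u v : List ℕ, ψ (u ++ v) = ψ u * ψ v := fun u v => by
      rw [hψ, hψ, hψ, List.map_append, List.prod_append]
    have h1 : ψ l = ψ (l.take m') * ψ (l.drop m') := by
      conv_lhs => rw [← List.take_append_drop m' l]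
      rw [hsplit]
    have h2 : ψ (l.rotate m) = ψ (l.drop m') * ψ (l.take m') := by
      rw [hrot, hsplit]
    rw [isConj_iff]
    refine ⟨(ψ (l.take m'))⁻¹, ?_⟩
    rw [h1, h2]
    group
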